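/- For pairwise distinct i, j, k ∈ {1,…,n}, the Dunkl angular momentum operators satisfy [L_{ij}, L_{jk}] = L_{ik}(1 + 2μ_j r_j) as operators on ℝ[x_1,…,x_n], where L_{ab} = x_a T_b − x_b T_a. -/

import Mathlib

open MvPolynomial Finset

noncomputable section

variable {n : ℕ}

/-- Reflection operator `r_i`. -/
def reflOp (i : Fin n) : Module.End ℝ (MvPolynomial (Fin n) ℝ) :=
  (MvPolynomial.aeval (fun j : Fin n => if j = i then -X i else X j)).toLinearMap

/-- Division by the variable `x_i` (as a linear operator, discarding non-divisible terms). -/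
def divXop (i : Fin n) : Module.End ℝ (MvPolynomial (Fin n) ℝ) where
  toFun p := p.divMonomial (Finsupp.single i 1)
  map_add' p q := by ext m; simp [coeff_divMonomial]
  map_smul' c p := by ext m; simp [coeff_divMonomial]

/-- The `i`-th `Z_2^n` Dunkl operator `T_i = ∂_i + μ_i x_i⁻¹ (1 - r_i)`. -/
def dunklT (μ : Fin n → ℝ) (i : Fin n) : Module.End ℝ (MvPolynomial (Fin n) ℝ) :=
  (pderiv i).toLinearMap + μ i • (divXop i * (1 - reflOp i))

/-- The intermediate Laplace–Dunkl operator `Δ_A = Σ_{i∈A} T_i²`. -/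
def lapD (μ : Fin n → ℝ) (A : Finset (Fin n)) : Module.End ℝ (MvPolynomial (Fin n) ℝ) :=
  ∑ i ∈ A, dunklT μ i ^ 2

/-- Multiplication by `‖x_A‖² = Σ_{i∈A} x_i²`. -/
def mulX2 (A : Finset (Fin n)) : Module.End ℝ (MvPolynomial (Fin n) ℝ) :=
  LinearMap.mulLeft ℝ (∑ i ∈ A, X i ^ 2)

/-- The Euler operator `E_A = Σ_{i∈A} x_i ∂_i`. -/
def eulerOp (A : Finset (Fin n)) : Module.End ℝ (MvPolynomial (Fin n) ℝ) :=
  ∑ i ∈ A, LinearMap.mulLeft ℝ (X i) * (pderiv i).toLinearMap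

/-- `γ_A = |A|/2 + Σ_{i∈A} μ_i`. -/
def gamA (μ : Fin n → ℝ) (A : Finset (Fin n)) : ℝ :=
  (A.card : ℝ) / 2 + ∑ i ∈ A, μ i

/-- The Casimir operator `C_A`. -/
def casOp (μ : Fin n → ℝ) (A : Finset (Fin n)) : Module.End ℝ (MvPolynomial (Fin n) ℝ) :=
  (1 / 4 : ℝ) • ((eulerOp A + gamA μ A • 1) ^ 2 - (2 : ℝ) • (eulerOp A + gamA μ A • 1)
    - mulX2 A * lapD μ A)

end

noncomputable section
variable {n : ℕ}

namespace Aux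

lemma reflOp_monomial (i : Fin n) (m : Fin n →₀ ℕ) (c : ℝ) :
    reflOp i (monomial m c) = ((-1:ℝ)^(m i)) • monomial m c := by
  have h1 : ∀ j kk, (if j = i then -X i else X j : MvPolynomial (Fin n) ℝ)^kk
      = C ((-1:ℝ)^(if j = i then kk else 0)) * X j ^ kk := by
    intro j kk
    split_ifs with h
    · subst h; rw [neg_pow]; simp [map_pow]
    · simp
  have h2 : (m.prod fun j kk => (if j = i then -X i else X j : MvPolynomial (Fin n) ℝ)^kk)
      = C ((-1:ℝ)^(m i)) * (m.prod fun j kk => (X j : MvPolynomial (Fin n) ℝ) ^ kk) := by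
    rw [Finsupp.prod_congr (g2 := fun j kk => C ((-1:ℝ)^(if j = i then kk else 0)) * X j ^ kk)
      (fun j _ => h1 j (m j)), Finsupp.prod_mul]
    congr 1
    rw [← map_finsuppProd]
    congr 1
    have : (m.prod fun j kk => ((-1:ℝ)^(if j = i then kk else 0)))
        = m.prod fun j kk => (if j = i then (-1:ℝ)^kk else 1) := by
      apply Finsupp.prod_congr; intro j _; split_ifs <;> simp
    rw [this, Finsupp.prod_ite_eq' m i (fun j kk => (-1:ℝ)^kk)]
    split_ifs with h
    · rfl
    · rw [Finsupp.notMem_support_iff.mp h]; simp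
  show aeval _ (monomial m c) = _
  rw [aeval_monomial, h2]
  rw [show (m.prod fun j kk => (X j : MvPolynomial (Fin n) ℝ) ^ kk) = monomial m 1 by
    rw [monomial_eq]; simp]
  rw [algebraMap_eq, ← mul_assoc, ← C_mul, C_mul_monomial, smul_monomial]
  congr 1
  rw [smul_eq_mul]; ring

end Aux

namespace Aux2
open Aux

/-- abbreviation -/
def ee (i : Fin n) : Fin n →₀ ℕ := Finsupp.single i 1

lemma ee_apply (i b : Fin n) : ee i b = if i = b then 1 else 0 := Finsupp.single_apply

lemma divXop_monomial (i : Fin n) (m : Fin n →₀ ℕ) (c : ℝ) (h : m i ≠ 0) :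
    divXop i (monomial m c) = monomial (m - ee i) c := by
  have hle : ee i ≤ m := by
    rw [ee, Finsupp.single_le_iff]; omega
  ext m'
  show coeff m' ((monomial m c).divMonomial (Finsupp.single i 1)) = _
  rw [coeff_divMonomial, coeff_monomial, coeff_monomial]
  congr 1
  simp only [eq_iff_iff]
  constructor
  · rintro rfl
    exact add_tsub_cancel_left (ee i) m'
  · rintro rfl
    exact (add_tsub_cancel_of_le hle).symm

/-- the Dunkl coefficient -/
def dc (μ : Fin n → ℝ) (i : Fin n) (m : Fin n →₀ ℕ) : ℝ :=
  (m i : ℝ) + μ i * (1 - (-1)^(m i))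

lemma dunklT_monomial (μ : Fin n → ℝ) (i : Fin n) (m : Fin n →₀ ℕ) :
    dunklT μ i (monomial m 1) = dc μ i m • monomial (m - ee i) 1 := by
  rw [dunklT]
  simp only [LinearMap.add_apply, LinearMap.smul_apply, Module.End.mul_apply,
    LinearMap.sub_apply, Module.End.one_apply, Derivation.coeFn_coe]
  rw [pderiv_monomial]
  rw [reflOp_monomial]
  rcases Nat.eq_zero_or_pos (m i) with h0 | hpos
  · have hm : m - Finsupp.single i 1 = m := by
      ext b; rw [Finsupp.tsub_apply, Finsupp.single_apply]
      rcases eq_or_ne i b with rfl | hb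
      · simp [h0]
      · simp [hb]
    have h1 : ((-1:ℝ))^(m i) = 1 := by rw [h0]; norm_num
    rw [h1, one_smul, sub_self, map_zero, smul_zero, add_zero, hm,
      show ee i = Finsupp.single i 1 from rfl, hm]
    simp [dc, h0, smul_monomial]
  · have hne : m i ≠ 0 := by omega
    have h2 : ((monomial m) (1:ℝ)) - ((-1:ℝ)) ^ (m i) • (monomial m) 1
        = monomial m (1 - (-1:ℝ)^(m i)) := by
      rw [smul_monomial, smul_eq_mul, mul_one, ← map_sub]
    rw [h2, divXop_monomial _ _ _ hne, show (Finsupp.single i 1 : Fin n →₀ ℕ) = ee i from rfl,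
      smul_monomial, smul_monomial, ← map_add]
    congr 1
    simp only [dc, smul_eq_mul]
    ring

lemma lhom_ext_monomial {f g : Module.End ℝ (MvPolynomial (Fin n) ℝ)}
    (h : ∀ m : Fin n →₀ ℕ, f (monomial m 1) = g (monomial m 1)) : f = g := by
  apply LinearMap.ext; intro p
  induction p using MvPolynomial.induction_on' with
  | monomial m a =>
    have : (monomial m a : MvPolynomial (Fin n) ℝ) = a • monomial m 1 := by
      rw [smul_monomial, smul_eq_mul, mul_one]
    rw [this, map_smul, map_smul, h]
  | add p q hp hq => simp only [map_add, hp, hq]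

lemma X_mul_monomial' (a : Fin n) (m : Fin n →₀ ℕ) (c : ℝ) :
    (X a : MvPolynomial (Fin n) ℝ) * monomial m c = monomial (ee a + m) c := by
  rw [X, monomial_mul, one_mul]; rfl

lemma ind_sub_ne (a b : Fin n) (hab : a ≠ b) (m : Fin n →₀ ℕ) : (m - ee b) a = m a := by
  rw [Finsupp.tsub_apply, ee_apply, if_neg (fun h => hab h.symm)]
  omega

lemma ind_add_ne (a b : Fin n) (hab : a ≠ b) (m : Fin n →₀ ℕ) : (ee a + m) b = m b := by
  rw [Finsupp.add_apply, ee_apply, if_neg hab]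
  omega

lemma ind_sub_sub (a b : Fin n) (m : Fin n →₀ ℕ) : m - ee a - ee b = m - ee b - ee a := by
  ext x; simp only [Finsupp.tsub_apply]; omega

lemma ind_add_sub (a b : Fin n) (hab : a ≠ b) (m : Fin n →₀ ℕ) :
    ee a + m - ee b = ee a + (m - ee b) := by
  ext x; simp only [Finsupp.tsub_apply, Finsupp.add_apply, ee_apply]
  split_ifs with h1 h2 <;> try omega
  all_goals exact absurd (h1.trans h2.symm) hab

lemma ind_add_sub_same (j : Fin n) (m : Fin n →₀ ℕ) : ee j + m - ee j = m :=
  add_tsub_cancel_left _ _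

lemma ind_sub_add_same (j : Fin n) (m : Fin n →₀ ℕ) (h : m j ≠ 0) : ee j + (m - ee j) = m := by
  rw [add_tsub_cancel_of_le]
  rw [ee, Finsupp.single_le_iff]; omega

lemma dc_sub_ne (μ : Fin n → ℝ) (a b : Fin n) (hab : a ≠ b) (m : Fin n →₀ ℕ) :
    dc μ a (m - ee b) = dc μ a m := by
  rw [dc, dc, ind_sub_ne a b hab]

lemma dc_add_ne (μ : Fin n → ℝ) (a b : Fin n) (hab : a ≠ b) (m : Fin n →₀ ℕ) :
    dc μ b (ee a + m) = dc μ b m := by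
  rw [dc, dc, ind_add_ne a b hab]

lemma T_comm (μ : Fin n → ℝ) (a b : Fin n) (hab : a ≠ b) :
    dunklT μ a * dunklT μ b = dunklT μ b * dunklT μ a := by
  apply lhom_ext_monomial; intro m
  simp only [Module.End.mul_apply, dunklT_monomial, map_smul, dc_sub_ne μ _ _ hab,
    dc_sub_ne μ _ _ hab.symm, smul_smul]
  rw [ind_sub_sub, mul_comm]

lemma T_mulX_comm (μ : Fin n → ℝ) (a b : Fin n) (hab : a ≠ b) :
    dunklT μ b * LinearMap.mulLeft ℝ (X a) = LinearMap.mulLeft ℝ (X a) * dunklT μ b := by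
  apply lhom_ext_monomial; intro m
  simp only [Module.End.mul_apply, LinearMap.mulLeft_apply, X_mul_monomial', dunklT_monomial,
    map_smul]
  rw [dc_add_ne μ a b hab, ind_add_sub a b hab]

lemma refl_mulX_comm (a j : Fin n) (haj : a ≠ j) :
    reflOp j * LinearMap.mulLeft ℝ (X a) = LinearMap.mulLeft ℝ (X a) * reflOp j := by
  apply lhom_ext_monomial; intro m
  simp only [Module.End.mul_apply, LinearMap.mulLeft_apply, X_mul_monomial', reflOp_monomial,
    map_smul]
  rw [ind_add_ne a j haj]

lemma refl_T_comm (μ : Fin n → ℝ) (a j : Fin n) (haj : a ≠ j) :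
    reflOp j * dunklT μ a = dunklT μ a * reflOp j := by
  apply lhom_ext_monomial; intro m
  simp only [Module.End.mul_apply, dunklT_monomial, reflOp_monomial, map_smul, smul_smul]
  rw [ind_sub_ne j a haj.symm, mul_comm]

lemma mulX_comm (a b : Fin n) :
    LinearMap.mulLeft ℝ (X a : MvPolynomial (Fin n) ℝ) * LinearMap.mulLeft ℝ (X b)
      = LinearMap.mulLeft ℝ (X b) * LinearMap.mulLeft ℝ (X a) := by
  apply lhom_ext_monomial; intro m
  simp only [Module.End.mul_apply, LinearMap.mulLeft_apply]
  rw [← mul_assoc, ← mul_assoc, mul_comm (X a) (X b)]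

lemma T_mulX_same (μ : Fin n → ℝ) (j : Fin n) :
    dunklT μ j * LinearMap.mulLeft ℝ (X j)
      = LinearMap.mulLeft ℝ (X j) * dunklT μ j + (1 + (2 * μ j) • reflOp j) := by
  apply lhom_ext_monomial; intro m
  simp only [Module.End.mul_apply, LinearMap.mulLeft_apply, LinearMap.add_apply,
    Module.End.one_apply, LinearMap.smul_apply, X_mul_monomial', dunklT_monomial, map_smul,
    reflOp_monomial, ind_add_sub_same]
  rcases Nat.eq_zero_or_pos (m j) with h0 | hpos
  · have hdc0 : dc μ j m = 0 := by simp [dc, h0]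
    have hdc1 : dc μ j (ee j + m) = 1 + 2 * μ j := by
      rw [dc, Finsupp.add_apply, ee_apply, if_pos rfl, h0]
      norm_num
      ring
    simp only [hdc0, hdc1, zero_smul, smul_zero, mul_zero, zero_add, h0, pow_zero, one_smul,
      smul_monomial, smul_eq_mul, mul_one, ← map_add]
    try congr 1
    try ring
  · have hm : ee j + (m - ee j) = m := ind_sub_add_same j m (by omega)
    have hdc : dc μ j (ee j + m) = dc μ j m + 1 + 2 * μ j * (-1)^(m j) := by
      rw [dc, dc, Finsupp.add_apply, ee_apply, if_pos rfl, add_comm 1 (m j), pow_succ]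
      push_cast
      ring
    rw [hm, hdc]
    simp only [smul_smul, smul_monomial, smul_eq_mul, mul_one, ← map_add]
    congr 1
    ring

/-- noncommutative-ring core identity -/
lemma key {R : Type*} [Ring R] (A B C Ti Tj Tk S : R)
    (hAB : A * B = B * A) (hAC : A * C = C * A) (hBC : B * C = C * B)
    (hTjA : Tj * A = A * Tj) (hTjC : Tj * C = C * Tj)
    (hTiB : Ti * B = B * Ti) (hTiC : Ti * C = C * Ti)
    (hTkA : Tk * A = A * Tk) (hTkB : Tk * B = B * Tk)
    (hTiTj : Ti * Tj = Tj * Ti) (hTiTk : Ti * Tk = Tk * Ti) (hTjTk : Tj * Tk = Tk * Tj)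
    (hTjB : Tj * B = B * Tj + S)
    (hSTi : S * Ti = Ti * S) (hSTk : S * Tk = Tk * S) :
    (A * Tj - B * Ti) * (B * Tk - C * Tj) - (B * Tk - C * Tj) * (A * Tj - B * Ti)
      = (A * Tk - C * Ti) * S := by
  have h1 : A * Tj * (B * Tk) = A * B * (Tj * Tk) + A * (Tk * S) := by
    calc A * Tj * (B * Tk) = A * (Tj * B) * Tk := by noncomm_ring
    _ = A * (B * Tj + S) * Tk := by rw [hTjB]
    _ = A * B * (Tj * Tk) + A * (S * Tk) := by noncomm_ring
    _ = A * B * (Tj * Tk) + A * (Tk * S) := by rw [hSTk]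
  have h2 : A * Tj * (C * Tj) = A * C * (Tj * Tj) := by
    calc A * Tj * (C * Tj) = A * (Tj * C) * Tj := by noncomm_ring
    _ = A * (C * Tj) * Tj := by rw [hTjC]
    _ = A * C * (Tj * Tj) := by noncomm_ring
  have h3 : B * Ti * (B * Tk) = B * B * (Ti * Tk) := by
    calc B * Ti * (B * Tk) = B * (Ti * B) * Tk := by noncomm_ring
    _ = B * (B * Ti) * Tk := by rw [hTiB]
    _ = B * B * (Ti * Tk) := by noncomm_ring
  have h4 : B * Ti * (C * Tj) = B * C * (Ti * Tj) := by
    calc B * Ti * (C * Tj) = B * (Ti * C) * Tj := by noncomm_ring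
    _ = B * (C * Ti) * Tj := by rw [hTiC]
    _ = B * C * (Ti * Tj) := by noncomm_ring
  have h5 : B * Tk * (A * Tj) = A * B * (Tj * Tk) := by
    calc B * Tk * (A * Tj) = B * (Tk * A) * Tj := by noncomm_ring
    _ = B * (A * Tk) * Tj := by rw [hTkA]
    _ = B * A * (Tk * Tj) := by noncomm_ring
    _ = A * B * (Tk * Tj) := by rw [← hAB]
    _ = A * B * (Tj * Tk) := by rw [hTjTk]
  have h6 : B * Tk * (B * Ti) = B * B * (Ti * Tk) := by
    calc B * Tk * (B * Ti) = B * (Tk * B) * Ti := by noncomm_ring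
    _ = B * (B * Tk) * Ti := by rw [hTkB]
    _ = B * B * (Tk * Ti) := by noncomm_ring
    _ = B * B * (Ti * Tk) := by rw [hTiTk]
  have h7 : C * Tj * (A * Tj) = A * C * (Tj * Tj) := by
    calc C * Tj * (A * Tj) = C * (Tj * A) * Tj := by noncomm_ring
    _ = C * (A * Tj) * Tj := by rw [hTjA]
    _ = C * A * (Tj * Tj) := by noncomm_ring
    _ = A * C * (Tj * Tj) := by rw [← hAC]
  have h8 : C * Tj * (B * Ti) = B * C * (Ti * Tj) + C * (Ti * S) := by
    calc C * Tj * (B * Ti) = C * (Tj * B) * Ti := by noncomm_ring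
    _ = C * (B * Tj + S) * Ti := by rw [hTjB]
    _ = C * B * (Tj * Ti) + C * (S * Ti) := by noncomm_ring
    _ = B * C * (Tj * Ti) + C * (Ti * S) := by rw [hBC, hSTi]
    _ = B * C * (Ti * Tj) + C * (Ti * S) := by rw [hTiTj]
  calc (A * Tj - B * Ti) * (B * Tk - C * Tj) - (B * Tk - C * Tj) * (A * Tj - B * Ti)
      = A * Tj * (B * Tk) - A * Tj * (C * Tj) - B * Ti * (B * Tk) + B * Ti * (C * Tj)
        - B * Tk * (A * Tj) + B * Tk * (B * Ti) + C * Tj * (A * Tj)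
        - C * Tj * (B * Ti) := by noncomm_ring
    _ = (A * B * (Tj * Tk) + A * (Tk * S)) - A * C * (Tj * Tj) - B * B * (Ti * Tk)
        + B * C * (Ti * Tj) - A * B * (Tj * Tk) + B * B * (Ti * Tk) + A * C * (Tj * Tj)
        - (B * C * (Ti * Tj) + C * (Ti * S)) := by rw [h1, h2, h3, h4, h5, h6, h7, h8]
    _ = (A * Tk - C * Ti) * S := by noncomm_ring

end Aux2

end


/-- `[L_{ij}, L_{jk}] = L_{ik}(1 + 2μ_j r_j)` for the Dunkl angular
momentum operators `L_{ab} = x_a T_b − x_b T_a`. -/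
theorem angular_momentum_comm {n : ℕ} (hn : 1 ≤ n) (μ : Fin n → ℝ) (hμ : ∀ i, 0 < μ i)
    (i j k : Fin n) (hij : i ≠ j) (hik : i ≠ k) (hjk : j ≠ k) :
    let L : Fin n → Fin n → Module.End ℝ (MvPolynomial (Fin n) ℝ) := fun a b =>
      LinearMap.mulLeft ℝ (X a) * dunklT μ b - LinearMap.mulLeft ℝ (X b) * dunklT μ a
    L i j * L j k - L j k * L i j = L i k * (1 + (2 * μ j) • reflOp j) := by
  intro L
  have hSTi : (1 + (2 * μ j) • reflOp j) * dunklT μ i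
      = dunklT μ i * (1 + (2 * μ j) • reflOp j) := by
    rw [add_mul, mul_add, one_mul, mul_one, smul_mul_assoc, mul_smul_comm,
      Aux2.refl_T_comm μ i j hij]
  have hSTk : (1 + (2 * μ j) • reflOp j) * dunklT μ k
      = dunklT μ k * (1 + (2 * μ j) • reflOp j) := by
    rw [add_mul, mul_add, one_mul, mul_one, smul_mul_assoc, mul_smul_comm,
      Aux2.refl_T_comm μ k j hjk.symm]
  simp only [L]
  exact Aux2.key _ _ _ _ _ _ _ (Aux2.mulX_comm i j) (Aux2.mulX_comm i k) (Aux2.mulX_comm j k)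
    (Aux2.T_mulX_comm μ i j hij) (Aux2.T_mulX_comm μ k j hjk.symm)
    (Aux2.T_mulX_comm μ j i hij.symm) (Aux2.T_mulX_comm μ k i hik.symm)
    (Aux2.T_mulX_comm μ i k hik) (Aux2.T_mulX_comm μ j k hjk)
    (Aux2.T_comm μ i j hij) (Aux2.T_comm μ i k hik) (Aux2.T_comm μ j k hjk)
    (Aux2.T_mulX_same μ j) hSTi hSTk
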